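/- Every adjoint pair (F,G) between abelian categories A and B, with unit η:1_A→GF and counit ε:FG→1_B, induces a Galois connection (φ,ψ) between the ordered collections of preradicals Pr(A) and Pr(B), where φ(τ) = Im(ε ∘ FτG) and ψ(σ) = Ker(Gσ*F ∘ η). -/

import Mathlib

open CategoryTheory CategoryTheory.Limits

universe v₁ v₂ u₁ u₂

variable {A : Type u₁} [Category.{v₁} A] [Abelian A]
variable {B : Type u₂} [Category.{v₂} B] [Abelian B]
variable (F : A ⥤ B) (G : B ⥤ A) (adj : F ⊣ G)

/-- `φ(τ) = Im(ε ∘ FτG)`. -/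
noncomputable def preradPhi (τ : Subobject (𝟭 A)) : Subobject (𝟭 B) :=
  imageSubobject
    ((Functor.whiskerRight (Functor.whiskerLeft G τ.arrow) F ≫ adj.counit :
      (G ⋙ (τ : A ⥤ A)) ⋙ F ⟶ 𝟭 B))

/-- `ψ(σ) = Ker(Gσ*F ∘ η)`. -/
noncomputable def preradPsi (σ : Subobject (𝟭 B)) : Subobject (𝟭 A) :=
  kernelSubobject
    ((adj.unit ≫ Functor.whiskerRight (Functor.whiskerLeft F (cokernel.π σ.arrow)) G :
      𝟭 A ⟶ (F ⋙ cokernel σ.arrow) ⋙ G))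

/-- An adjoint pair between abelian categories induces a Galois connection between
the collections of preradicals. -/
theorem adjunction_induces_galois_connection_on_preradicals :
    Monotone (preradPhi F G adj) ∧ Monotone (preradPsi F G adj) ∧
      (∀ τ : Subobject (𝟭 A), τ ≤ preradPsi F G adj (preradPhi F G adj τ)) ∧
      (∀ σ : Subobject (𝟭 B), preradPhi F G adj (preradPsi F G adj σ) ≤ σ) := by
  refine ⟨?_, ?_, ?_, ?_⟩
  · -- Monotone φ
    intro τ τ' h
    simp only [preradPhi]
    exact imageSubobject_le _
      (Functor.whiskerRight (Functor.whiskerLeft G (Subobject.ofLE τ τ' h)) F ≫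
        factorThruImageSubobject (Functor.whiskerRight (Functor.whiskerLeft G τ'.arrow) F ≫ adj.counit))
      (by
        rw [Category.assoc, imageSubobject_arrow_comp, ← Category.assoc,
          ← Functor.whiskerRight_comp, ← Functor.whiskerLeft_comp, Subobject.ofLE_arrow])
  · -- Monotone ψ
    intro σ σ' h
    simp only [preradPsi]
    have hd : σ.arrow ≫ cokernel.π σ'.arrow = 0 := by
      rw [← Subobject.ofLE_arrow h, Category.assoc, cokernel.condition, comp_zero]
    have hπ : cokernel.π σ'.arrow = cokernel.π σ.arrow ≫ cokernel.desc σ.arrow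
        (cokernel.π σ'.arrow) hd := (cokernel.π_desc _ _ _).symm
    refine le_kernelSubobject _ _ ?_
    rw [hπ, Functor.whiskerLeft_comp, Functor.whiskerRight_comp, ← Category.assoc, ← Category.assoc,
      Category.assoc _ adj.unit, kernelSubobject_arrow_comp, zero_comp]
  · -- τ ≤ ψ(φ τ)
    intro τ
    simp only [preradPhi, preradPsi]
    set e := (Functor.whiskerRight (Functor.whiskerLeft G τ.arrow) F ≫ adj.counit :
      (G ⋙ (τ : A ⥤ A)) ⋙ F ⟶ 𝟭 B) with he
    set π := cokernel.π (imageSubobject e).arrow with hπ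
    haveI : F.IsLeftAdjoint := ⟨G, ⟨adj⟩⟩
    haveI : G.IsRightAdjoint := ⟨F, ⟨adj⟩⟩
    have h0 : e ≫ π = 0 := by
      have h1 : factorThruImageSubobject e ≫ ((imageSubobject e).arrow ≫ π) = e ≫ π := by
        rw [← Category.assoc, imageSubobject_arrow_comp]
      rw [← h1, hπ, cokernel.condition, comp_zero]
    refine le_kernelSubobject _ _ ?_
    ext X
    have h0X := congrArg (fun α => NatTrans.app α (F.obj X)) h0
    simp only [he, NatTrans.comp_app, Functor.whiskerRight_app, Functor.whiskerLeft_app, zero_app,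
      Category.assoc] at h0X ⊢
    -- naturality of τ.arrow at the unit
    have n1 : τ.arrow.app X ≫ adj.unit.app X =
        (Subobject.underlying.obj τ).map (adj.unit.app X) ≫
          τ.arrow.app (G.obj (F.obj X)) := by
      simpa using (τ.arrow.naturality (adj.unit.app X)).symm
    -- naturality of the unit at τ.arrow
    have n2 : τ.arrow.app (G.obj (F.obj X)) ≫ adj.unit.app (G.obj (F.obj X)) =
        adj.unit.app ((Subobject.underlying.obj τ).obj (G.obj (F.obj X))) ≫
          G.map (F.map (τ.arrow.app (G.obj (F.obj X)))) := by
      simpa using adj.unit.naturality (τ.arrow.app (G.obj (F.obj X)))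
    have tri : τ.arrow.app (G.obj (F.obj X)) ≫ G.map (π.app (F.obj X)) =
        τ.arrow.app (G.obj (F.obj X)) ≫ adj.unit.app (G.obj (F.obj X)) ≫
          G.map (adj.counit.app (F.obj X)) ≫ G.map (π.app (F.obj X)) := by
      rw [adj.right_triangle_components_assoc]
    rw [← Category.assoc, n1, Category.assoc, tri, ← Category.assoc _ (adj.unit.app _), n2,
      Category.assoc]
    rw [← Functor.map_comp, ← Functor.map_comp, h0X, Functor.map_zero, comp_zero, comp_zero]
  · -- φ(ψ σ) ≤ σ
    intro σ
    simp only [preradPhi, preradPsi]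
    haveI : F.IsLeftAdjoint := ⟨G, ⟨adj⟩⟩
    haveI : G.IsRightAdjoint := ⟨F, ⟨adj⟩⟩
    set m := (adj.unit ≫ Functor.whiskerRight (Functor.whiskerLeft F (cokernel.π σ.arrow)) G :
      𝟭 A ⟶ (F ⋙ cokernel σ.arrow) ⋙ G) with hm
    set k := (kernelSubobject m).arrow with hk
    have hker : k ≫ m = 0 := kernelSubobject_arrow_comp m
    have hf : (Functor.whiskerRight (Functor.whiskerLeft G k) F ≫ adj.counit) ≫ cokernel.π σ.arrow = 0 := by
      ext Y
      have hY := congrArg (fun α => NatTrans.app α (G.obj Y)) hker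
      simp only [hm, NatTrans.comp_app, Functor.whiskerRight_app, Functor.whiskerLeft_app, zero_app,
        Category.assoc] at hY ⊢
      have key : F.map (k.app (G.obj Y)) ≫
          (cokernel.π σ.arrow).app (F.obj (G.obj Y)) = 0 := by
        have tri : F.map (k.app (G.obj Y)) ≫ (cokernel.π σ.arrow).app (F.obj (G.obj Y)) =
            F.map (k.app (G.obj Y)) ≫ F.map (adj.unit.app (G.obj Y)) ≫
              adj.counit.app (F.obj (G.obj Y)) ≫
                (cokernel.π σ.arrow).app (F.obj (G.obj Y)) := by
          simp
        have n3 : adj.counit.app (F.obj (G.obj Y)) ≫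
            (cokernel.π σ.arrow).app (F.obj (G.obj Y)) =
            F.map (G.map ((cokernel.π σ.arrow).app (F.obj (G.obj Y)))) ≫
              adj.counit.app ((cokernel σ.arrow).obj (F.obj (G.obj Y))) := by
          simpa using (adj.counit.naturality
            ((cokernel.π σ.arrow).app (F.obj (G.obj Y)))).symm
        rw [tri, n3, ← Functor.map_comp_assoc, ← Functor.map_comp_assoc, Category.assoc,
          hY, Functor.map_zero, zero_comp]
      have n5 : adj.counit.app Y ≫ (cokernel.π σ.arrow).app Y =
          (cokernel.π σ.arrow).app (F.obj (G.obj Y)) ≫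
            (cokernel σ.arrow).map (adj.counit.app Y) := by
        simpa using (cokernel.π σ.arrow).naturality (adj.counit.app Y)
      rw [n5, ← Category.assoc, key, zero_comp]
    exact imageSubobject_le _ (Abelian.monoLift σ.arrow _ hf) (Abelian.monoLift_comp _ _ _)
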